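/- Let n be a positive integer and let (B_k)_{k≥1} be a sequence of n×n substochastic matrices such that B_1 is convergent (i.e. B_1^k → 0 as k → ∞) and, for every k, Ĵ(B_k) = Ĵ(B_1) and the digraph of B_k equals the digraph of B_1. Then the generalized index of contraction satisfies ĉon(B_1, B_2, …) < n. -/

import Mathlib

open Matrix Filter Finset

/-- A substochastic matrix: nonnegative entries, row sums at most one. -/
def IsSubstochastic {m n : Type*} [Fintype n] (B : Matrix m n ℝ) : Prop :=
  (∀ i j, 0 ≤ B i j) ∧ ∀ i, ∑ j, B i j ≤ 1

/-- Ĵ(B): the set of rows with row-sum strictly less than one. -/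
def Jhat {m n : Type*} [Fintype n] (B : Matrix m n ℝ) : Set m :=
  {i | ∑ j, B i j < 1}

/-- There is a walk of length `ℓ` (a nonempty sequence of `ℓ` consecutive edges) in the
digraph of `A` (edge `i → j` iff `A i j ≠ 0`) starting at `i` and ending in `S`. -/
def IsWalkTo {V : Type*} (A : Matrix V V ℝ) (i : V) (S : Set V) (ℓ : ℕ) : Prop :=
  1 ≤ ℓ ∧ ∃ w : ℕ → V, w 0 = i ∧ (∀ k < ℓ, A (w k) (w (k + 1)) ≠ 0) ∧ w ℓ ∈ S

/-- The index of contraction `ĉon B ∈ ℕ∞`: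
`max(0, sup_{i ∉ Ĵ(B)} inf_{p ∈ P̂ᵢ(B)} |p|)` with `inf ∅ = ∞`, `sup ∅ = -∞`
(in `ℕ∞` the empty supremum is `0`, matching `max(0, -∞) = 0`). -/
noncomputable def conHat {V : Type*} [Fintype V] (B : Matrix V V ℝ) : ℕ∞ :=
  ⨆ i ∈ (Jhat B)ᶜ, ⨅ ℓ ∈ {ℓ : ℕ | IsWalkTo B i (Jhat B) ℓ}, (ℓ : ℕ∞)

/-- The maximum absolute row-sum norm `‖·‖_∞`. -/
noncomputable def rowSumNorm {m n : Type*} [Fintype n] (B : Matrix m n ℝ) : ℝ :=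
  ⨆ i, ∑ j, |B i j|

/-- `B` is convergent: `Bᵏ → 0` as `k → ∞`. -/
def IsConvergent {V : Type*} [Fintype V] [DecidableEq V] (B : Matrix V V ℝ) : Prop :=
  Tendsto (fun k : ℕ => B ^ k) atTop (nhds 0)

/-- `B` is irreducible: its digraph is strongly connected, i.e. for every pair of
vertices `i, j` there is a walk from `i` to `j`. -/
def IsIrreducibleMat {V : Type*} (B : Matrix V V ℝ) : Prop :=
  ∀ i j : V, ∃ ℓ : ℕ, 1 ≤ ℓ ∧
    ∃ w : ℕ → V, w 0 = i ∧ w ℓ = j ∧ ∀ k < ℓ, B (w k) (w (k + 1)) ≠ 0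

/-- Lengths of walks in the sequence of digraphs of the square matrices `(B_k)`, starting
at vertex `i`: the `k`-th edge `(i_k, i_{k+1})` must satisfy `(B_k)_{i_k i_{k+1}} ≠ 0`,
and the last vertex must lie in `Ĵ(B_{|p|+1})`. -/
def seqWalkLengthsSq {n : ℕ} (B : ℕ → Matrix (Fin n) (Fin n) ℝ) (i : Fin n) : Set ℕ :=
  {ℓ : ℕ | 1 ≤ ℓ ∧ ∃ w : ℕ → Fin n, w 0 = i ∧
    (∀ k < ℓ, B k (w k) (w (k + 1)) ≠ 0) ∧ w ℓ ∈ Jhat (B ℓ)}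

/-- The generalized index of contraction `ĉon (B_1, B_2, …) ∈ ℕ∞` of a sequence of
square substochastic matrices. -/
noncomputable def conHatSeqSq {n : ℕ} (B : ℕ → Matrix (Fin n) (Fin n) ℝ) : ℕ∞ :=
  ⨆ i ∈ (Jhat (B 0))ᶜ, ⨅ ℓ ∈ seqWalkLengthsSq B i, (ℓ : ℕ∞)

/-- Auxiliary: there is a walk of length `ℓ` (possibly `0`) from `i` ending in `Jhat A`. -/
def ReachAux {n : ℕ} (A : Matrix (Fin n) (Fin n) ℝ) (i : Fin n) (ℓ : ℕ) : Prop :=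
  ∃ w : ℕ → Fin n, w 0 = i ∧ (∀ k < ℓ, A (w k) (w (k + 1)) ≠ 0) ∧ w ℓ ∈ Jhat A

lemma reachAux_shorten {n : ℕ} (A : Matrix (Fin n) (Fin n) ℝ) (i : Fin n) :
    ∀ ℓ, ReachAux A i ℓ → ∃ ℓ' ≤ n - 1, ReachAux A i ℓ' := by
  intro ℓ
  induction ℓ using Nat.strong_induction_on with
  | _ ℓ ih =>
    intro h
    by_cases hle : ℓ ≤ n - 1
    · exact ⟨ℓ, hle, h⟩
    · push_neg at hle
      obtain ⟨w, hw0, hwe, hwJ⟩ := h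
      have hpos : 0 < n := i.pos
      have hnℓ : n ≤ ℓ := by omega
      -- pigeonhole: w on {0,...,n} is not injective
      have hni : ¬ Function.Injective (fun k : Fin (n + 1) => w k) := by
        intro hinj
        have := Fintype.card_le_of_injective _ hinj
        simp [Fintype.card_fin] at this
      obtain ⟨a', b', heq, hne⟩ := Function.not_injective_iff.mp hni
      -- wlog a < b
      obtain ⟨a, b, hab, hbn, hwab⟩ : ∃ a b : ℕ, a < b ∧ b ≤ n ∧ w a = w b := by
        rcases lt_or_gt_of_ne hne with h' | h'
        · exact ⟨a', b', h', Nat.lt_succ_iff.mp b'.isLt, heq⟩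
        · exact ⟨b', a', h', Nat.lt_succ_iff.mp a'.isLt, heq.symm⟩
      set d := b - a with hd
      have hdpos : 0 < d := by omega
      set L := ℓ - d with hL
      set w' : ℕ → Fin n := fun k => if k < a then w k else w (k + d) with hw'
      have hw'ge : ∀ k, a ≤ k → w' k = w (k + d) := by
        intro k hk
        simp [hw', not_lt.mpr hk]
      have hw'le : ∀ k ≤ a, w' k = w k := by
        intro k hk
        by_cases hk' : k < a
        · simp [hw', hk']
        · have hka : k = a := by omega
          subst hka
          rw [hw'ge k le_rfl]
          have : k + d = b := by omega
          rw [this, ← hwab]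
      have hnew : ReachAux A i L := by
        refine ⟨w', ?_, ?_, ?_⟩
        · rw [hw'le 0 (Nat.zero_le _), hw0]
        · intro k hk
          by_cases hka : k < a
          · rw [hw'le k (le_of_lt hka), hw'le (k + 1) hka]
            exact hwe k (by omega)
          · push_neg at hka
            rw [hw'ge k hka, hw'ge (k + 1) (by omega)]
            have : k + 1 + d = k + d + 1 := by omega
            rw [this]
            exact hwe (k + d) (by omega)
        · have haL : a ≤ L := by omega
          rw [hw'ge L haL]
          have : L + d = ℓ := by omega
          rw [this]
          exact hwJ
      exact ih L (by omega) hnew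

lemma reachAux_exists {n : ℕ} (A : Matrix (Fin n) (Fin n) ℝ)
    (hS : IsSubstochastic A) (hconv : IsConvergent A) (i : Fin n) :
    ∃ ℓ, ReachAux A i ℓ := by
  by_contra hi
  set S : Fin n → Prop := fun j => ¬ ∃ ℓ, ReachAux A j ℓ with hSdef
  have hiS : S i := hi
  have hrow : ∀ j, S j → ∑ m, A j m = 1 := by
    intro j hj
    have hnJ : j ∉ Jhat A := by
      intro hJ
      exact hj ⟨0, fun _ => j, rfl, fun k hk => absurd hk (by omega), hJ⟩
    have hle := hS.2 j
    have h2 : ¬ (∑ m, A j m < 1) := hnJ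
    exact le_antisymm hle (not_lt.mp h2)
  have hstep : ∀ j, S j → ∀ m, A j m ≠ 0 → S m := by
    intro j hj m hjm hm
    apply hj
    obtain ⟨ℓ, w, hw0, hwe, hwJ⟩ := hm
    refine ⟨ℓ + 1, fun k => if k = 0 then j else w (k - 1), by simp, ?_, ?_⟩
    · intro k hk
      rcases Nat.eq_zero_or_pos k with rfl | hkpos
      · simpa [hw0] using hjm
      · have h1 : ¬ (k = 0) := by omega
        have h2 : ¬ (k + 1 = 0) := by omega
        simp only [if_neg h1, if_neg h2]
        have : k + 1 - 1 = (k - 1) + 1 := by omega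
        rw [this]
        exact hwe (k - 1) (by omega)
    · simpa using hwJ
  have hpow : ∀ k, ∀ j, S j → ∑ m, (A ^ k) j m = 1 := by
    intro k
    induction k with
    | zero =>
      intro j _
      simp [Matrix.one_apply]
    | succ k ihk =>
      intro j hj
      calc ∑ m, (A ^ (k + 1)) j m = ∑ m, ∑ p, A j p * (A ^ k) p m := by
            simp [pow_succ', Matrix.mul_apply]
        _ = ∑ p, A j p * ∑ m, (A ^ k) p m := by
            rw [Finset.sum_comm]
            simp [Finset.mul_sum]
        _ = ∑ p, A j p := by
            apply Finset.sum_congr rfl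
            intro p _
            by_cases hp : A j p = 0
            · simp [hp]
            · rw [ihk p (hstep j hj p hp), mul_one]
        _ = 1 := hrow j hj
  have hcont : Continuous (fun M : Matrix (Fin n) (Fin n) ℝ => ∑ m, M i m) := by
    apply continuous_finset_sum
    intro m _
    exact (continuous_apply m).comp (continuous_apply i)
  have h1 : Tendsto (fun k : ℕ => ∑ m, (A ^ k) i m) atTop (nhds 0) := by
    have := (hcont.tendsto 0).comp hconv
    simpa [Function.comp_def] using this
  have h2 : Tendsto (fun k : ℕ => ∑ m, (A ^ k) i m) atTop (nhds 1) := by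
    have heq : (fun k : ℕ => ∑ m, (A ^ k) i m) = fun _ => (1 : ℝ) :=
      funext fun k => hpow k i hiS
    rw [heq]
    exact tendsto_const_nhds
  exact one_ne_zero (tendsto_nhds_unique h2 h1)

theorem stmt19 {n : ℕ} (hn : 0 < n) (B : ℕ → Matrix (Fin n) (Fin n) ℝ)
    (hB : ∀ k, IsSubstochastic (B k))
    (hconv : IsConvergent (B 0))
    (hJ : ∀ k, Jhat (B k) = Jhat (B 0))
    (hgraph : ∀ k i j, B k i j ≠ 0 ↔ B 0 i j ≠ 0) :
    conHatSeqSq B < (n : ℕ∞) := by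
  classical
  have key : ∀ i ∈ (Jhat (B 0))ᶜ, ∃ ℓ ∈ seqWalkLengthsSq B i, ℓ ≤ n - 1 := by
    intro i hi
    obtain ⟨ℓ0, hr⟩ := reachAux_exists (B 0) (hB 0) hconv i
    obtain ⟨ℓ, hℓ, w, hw0, hwe, hwJ⟩ := reachAux_shorten (B 0) i ℓ0 hr
    have h1 : 1 ≤ ℓ := by
      rcases Nat.eq_zero_or_pos ℓ with h0 | h
      · exfalso; apply hi; subst h0; rwa [hw0] at hwJ
      · exact h
    refine ⟨ℓ, ⟨h1, w, hw0, ?_, ?_⟩, hℓ⟩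
    · intro k hk; exact (hgraph k _ _).mpr (hwe k hk)
    · rw [hJ ℓ]; exact hwJ
  rw [conHatSeqSq]
  calc (⨆ i ∈ (Jhat (B 0))ᶜ, ⨅ ℓ ∈ seqWalkLengthsSq B i, (ℓ : ℕ∞)) ≤ ((n - 1 : ℕ) : ℕ∞) := by
        apply iSup₂_le
        intro i hi
        obtain ⟨ℓ, hmem, hle⟩ := key i hi
        exact le_trans (iInf₂_le ℓ hmem) (by exact_mod_cast hle)
    _ < (n : ℕ∞) := by exact_mod_cast Nat.sub_lt hn one_pos
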